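/- arXiv:2508.00707 — 2 statements merged into one kernel-verified Lean document; each statement's English description precedes it below -/
import Mathlib

section
/- Let 𝒫_p(P̂, ε) = {P ∈ Δ_N : ‖P − P̂‖_p ≤ ε} denote an L_p ball of distributions. Then for any 1 ≤ p ≤ ∞, nominal distributions P̂ ∈ Δ_M, Q̂ ∈ Δ_N, and radii ε_1, ε_2 ≥ 0, the product set satisfies 𝒫_p(P̂, ε_1) ⊗ 𝒫_p(Q̂, ε_2) ⊆ 𝒫_p(P̂ ⊗ Q̂, ε_1 + ε_2). -/
open scoped ENNReal

/-- The `L_p` norm of a vector, for `p ∈ [1, ∞]` (extended real exponent). -/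
noncomputable def lpNorm {ι : Type*} [Fintype ι] (p : ℝ≥0∞) (f : ι → ℝ) : ℝ :=
  if p = ∞ then ⨆ i, |f i| else (∑ i, |f i| ^ p.toReal) ^ (1 / p.toReal)

/-- The probability simplex on a finite index type. -/
def simplex (ι : Type*) [Fintype ι] : Set (ι → ℝ) :=
  {P | (∀ i, 0 ≤ P i) ∧ ∑ i, P i = 1}

/-- An `L_p` ball of probability distributions around a nominal distribution. -/
noncomputable def lpBall {ι : Type*} [Fintype ι] (p : ℝ≥0∞) (Phat : ι → ℝ)
    (eps : ℝ) : Set (ι → ℝ) :=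
  {P ∈ simplex ι | lpNorm p (P - Phat) ≤ eps}

-- triangle
lemma lpNorm_add_le {ι : Type*} [Fintype ι] [Nonempty ι] {p : ℝ≥0∞} (hp : 1 ≤ p)
    (f g : ι → ℝ) : lpNorm p (f + g) ≤ lpNorm p f + lpNorm p g := by
  unfold lpNorm
  split_ifs with h
  · refine ciSup_le fun i => ?_
    calc |(f + g) i| ≤ |f i| + |g i| := abs_add_le _ _
    _ ≤ _ := add_le_add
        (le_ciSup (f := fun i => |f i|) (Set.Finite.bddAbove (Set.finite_range _)) i)
        (le_ciSup (f := fun i => |g i|) (Set.Finite.bddAbove (Set.finite_range _)) i)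
  · have hr : 1 ≤ p.toReal := by
      simpa using ENNReal.toReal_mono h hp
    simpa using Real.Lp_add_le Finset.univ f g hr

-- weight on left
lemma lpNorm_weight_left {ι κ : Type*} [Fintype ι] [Fintype κ] [Nonempty ι] [Nonempty κ]
    {p : ℝ≥0∞} (hp : 1 ≤ p) {w : ι → ℝ} (hw : w ∈ simplex ι) (x : κ → ℝ) :
    lpNorm p (fun ij : ι × κ => w ij.1 * x ij.2) ≤ lpNorm p x := by
  obtain ⟨hw0, hw1⟩ := hw
  have hwle1 : ∀ i, w i ≤ 1 := by
    intro i
    calc w i ≤ ∑ j, w j := Finset.single_le_sum (fun j _ => hw0 j) (Finset.mem_univ i)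
    _ = 1 := hw1
  unfold lpNorm
  split_ifs with h
  · refine ciSup_le fun ij => ?_
    calc |w ij.1 * x ij.2| = w ij.1 * |x ij.2| := by
          rw [abs_mul, abs_of_nonneg (hw0 _)]
    _ ≤ |x ij.2| := mul_le_of_le_one_left (abs_nonneg _) (hwle1 _)
    _ ≤ _ := le_ciSup (f := fun j => |x j|) (Set.Finite.bddAbove (Set.finite_range _)) ij.2
  · have hr : 1 ≤ p.toReal := by simpa using ENNReal.toReal_mono h hp
    have hr0 : 0 < p.toReal := lt_of_lt_of_le one_pos hr
    have key : ∑ ij : ι × κ, |w ij.1 * x ij.2| ^ p.toReal ≤ ∑ j, |x j| ^ p.toReal := by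
      rw [Fintype.sum_prod_type]
      have : ∀ i, ∑ j, |w i * x j| ^ p.toReal = w i ^ p.toReal * ∑ j, |x j| ^ p.toReal := by
        intro i
        rw [Finset.mul_sum]
        refine Finset.sum_congr rfl fun j _ => ?_
        rw [abs_mul, abs_of_nonneg (hw0 i), Real.mul_rpow (hw0 i) (abs_nonneg _)]
      simp_rw [this]
      rw [← Finset.sum_mul]
      have hsum : ∑ i, w i ^ p.toReal ≤ 1 := by
        calc ∑ i, w i ^ p.toReal ≤ ∑ i, w i := by
              refine Finset.sum_le_sum fun i _ => ?_
              rcases eq_or_lt_of_le (hw0 i) with h0 | h0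
              · rw [← h0, Real.zero_rpow hr0.ne']
              · calc w i ^ p.toReal ≤ w i ^ (1:ℝ) :=
                    Real.rpow_le_rpow_of_exponent_ge h0 (hwle1 i) hr
                _ = w i := Real.rpow_one _
        _ = 1 := hw1
      calc (∑ i, w i ^ p.toReal) * ∑ j, |x j| ^ p.toReal
          ≤ 1 * ∑ j, |x j| ^ p.toReal :=
            mul_le_mul_of_nonneg_right hsum
              (Finset.sum_nonneg fun j _ => Real.rpow_nonneg (abs_nonneg _) _)
      _ = _ := one_mul _
    exact Real.rpow_le_rpow (Finset.sum_nonneg fun _ _ => Real.rpow_nonneg (abs_nonneg _) _)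
      key (by positivity)

lemma lpNorm_weight_right {ι κ : Type*} [Fintype ι] [Fintype κ] [Nonempty ι] [Nonempty κ]
    {p : ℝ≥0∞} (hp : 1 ≤ p) {w : κ → ℝ} (hw : w ∈ simplex κ) (x : ι → ℝ) :
    lpNorm p (fun ij : ι × κ => x ij.1 * w ij.2) ≤ lpNorm p x := by
  have := lpNorm_weight_left (ι := κ) (κ := ι) hp hw x
  unfold lpNorm at this ⊢
  split_ifs with h <;> split_ifs at this with h' <;> try exact absurd h h'
  · rw [show (⨆ ij : ι × κ, |x ij.1 * w ij.2|) = ⨆ ij : κ × ι, |w ij.1 * x ij.2| from ?_]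
    · exact this
    · exact le_antisymm
        (ciSup_le fun ij => by
          calc |x ij.1 * w ij.2| = |w ij.2 * x ij.1| := by rw [mul_comm]
          _ ≤ _ := le_ciSup (f := fun ij : κ × ι => |w ij.1 * x ij.2|)
            (Set.Finite.bddAbove (Set.finite_range _)) (ij.2, ij.1))
        (ciSup_le fun ij => by
          calc |w ij.1 * x ij.2| = |x ij.2 * w ij.1| := by rw [mul_comm]
          _ ≤ _ := le_ciSup (f := fun ij : ι × κ => |x ij.1 * w ij.2|)
            (Set.Finite.bddAbove (Set.finite_range _)) (ij.2, ij.1))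
  · rw [show (∑ ij : ι × κ, |x ij.1 * w ij.2| ^ p.toReal)
        = ∑ ij : κ × ι, |w ij.1 * x ij.2| ^ p.toReal from ?_]
    · exact this
    · rw [Fintype.sum_prod_type, Fintype.sum_prod_type, Finset.sum_comm]
      simp [mul_comm]

/-- Theorem 2: the outer product of two `L_p` balls of distributions is
contained in the `L_p` ball around the product nominal, with radius the sum
of the radii. -/
theorem lp_ball_kronecker_subset {M N : ℕ} (p : ℝ≥0∞) (hp : 1 ≤ p)
    (Phat : Fin M → ℝ) (Qhat : Fin N → ℝ)
    (hPhat : Phat ∈ simplex (Fin M)) (hQhat : Qhat ∈ simplex (Fin N))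
    (eps1 eps2 : ℝ) (heps1 : 0 ≤ eps1) (heps2 : 0 ≤ eps2)
    (P : Fin M → ℝ) (Q : Fin N → ℝ)
    (hP : P ∈ lpBall p Phat eps1) (hQ : Q ∈ lpBall p Qhat eps2) :
    (fun ij : Fin M × Fin N => P ij.1 * Q ij.2) ∈
      lpBall p (fun ij : Fin M × Fin N => Phat ij.1 * Qhat ij.2) (eps1 + eps2) := by
  haveI : Nonempty (Fin M) := by
    rcases Nat.eq_zero_or_pos M with rfl | h
    · exact absurd hPhat.2 (by simp)
    · exact ⟨⟨0, h⟩⟩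
  haveI : Nonempty (Fin N) := by
    rcases Nat.eq_zero_or_pos N with rfl | h
    · exact absurd hQhat.2 (by simp)
    · exact ⟨⟨0, h⟩⟩
  obtain ⟨hPs, hPn⟩ := hP
  obtain ⟨hQs, hQn⟩ := hQ
  refine ⟨⟨fun ij => mul_nonneg (hPs.1 _) (hQs.1 _), ?_⟩, ?_⟩
  · rw [Fintype.sum_prod_type]
    simp_rw [← Finset.mul_sum, ← Finset.sum_mul]
    rw [hPs.2, hQs.2, one_mul]
  · have hdecomp : (fun ij : Fin M × Fin N => P ij.1 * Q ij.2)
        - (fun ij : Fin M × Fin N => Phat ij.1 * Qhat ij.2)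
        = (fun ij : Fin M × Fin N => P ij.1 * (Q - Qhat) ij.2)
          + (fun ij : Fin M × Fin N => (P - Phat) ij.1 * Qhat ij.2) := by
      funext ij
      simp only [Pi.sub_apply, Pi.add_apply]
      ring
    rw [hdecomp]
    calc lpNorm p ((fun ij : Fin M × Fin N => P ij.1 * (Q - Qhat) ij.2)
          + (fun ij : Fin M × Fin N => (P - Phat) ij.1 * Qhat ij.2))
        ≤ lpNorm p (fun ij : Fin M × Fin N => P ij.1 * (Q - Qhat) ij.2)
          + lpNorm p (fun ij : Fin M × Fin N => (P - Phat) ij.1 * Qhat ij.2) :=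
          lpNorm_add_le hp _ _
      _ ≤ lpNorm p (Q - Qhat) + lpNorm p (P - Phat) :=
          add_le_add (lpNorm_weight_left hp hPs _) (lpNorm_weight_right hp hQhat _)
      _ ≤ eps2 + eps1 := add_le_add hQn hPn
      _ = eps1 + eps2 := add_comm _ _
end

section
/- The McCormick envelope exactly characterizes the convex hull of the bilinear graph: the set {(p, q, pq) : p ∈ [p̲, p̄], q ∈ [q̲, q̄]} has convex hull equal to the set of (p, q, h) with p ∈ [p̲, p̄], q ∈ [q̲, q̄] satisfying h ≥ pq̲ + qp̲ − p̲q̲, h ≥ pq̄ + qp̄ − p̄q̄, h ≤ pq̲ + qp̄ − p̄q̲, and h ≤ pq̄ + qp̲ − p̲q̄. -/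
/-- McCormick's theorem: the four envelope inequalities exactly characterise
the convex hull of the graph of the bilinear product over a box. -/
theorem mccormick_convexHull (pl pu ql qu : ℝ) (hpl : pl ≤ pu) (hql : ql ≤ qu) :
    convexHull ℝ
      {x : ℝ × ℝ × ℝ | ∃ p q, pl ≤ p ∧ p ≤ pu ∧ ql ≤ q ∧ q ≤ qu ∧
        x = (p, q, p * q)} =
    {x : ℝ × ℝ × ℝ |
      pl ≤ x.1 ∧ x.1 ≤ pu ∧ ql ≤ x.2.1 ∧ x.2.1 ≤ qu ∧
      x.2.2 ≥ x.1 * ql + x.2.1 * pl - pl * ql ∧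
      x.2.2 ≥ x.1 * qu + x.2.1 * pu - pu * qu ∧
      x.2.2 ≤ x.1 * ql + x.2.1 * pu - pu * ql ∧
      x.2.2 ≤ x.1 * qu + x.2.1 * pl - pl * qu} := by
  apply Set.Subset.antisymm
  · apply convexHull_min
    · rintro x ⟨p, q, h1, h2, h3, h4, rfl⟩
      refine ⟨h1, h2, h3, h4, ?_, ?_, ?_, ?_⟩ <;> simp only <;>
        nlinarith [mul_nonneg (sub_nonneg.2 h1) (sub_nonneg.2 h3),
          mul_nonneg (sub_nonneg.2 h2) (sub_nonneg.2 h4),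
          mul_nonneg (sub_nonneg.2 h1) (sub_nonneg.2 h4),
          mul_nonneg (sub_nonneg.2 h2) (sub_nonneg.2 h3)]
    · intro x hx y hy a b ha hb hab
      obtain ⟨x1, x2, x3, x4, x5, x6, x7, x8⟩ := hx
      obtain ⟨y1, y2, y3, y4, y5, y6, y7, y8⟩ := hy
      have hb' : b = 1 - a := by linarith
      subst hb'
      simp only [Set.mem_setOf_eq, Prod.fst_add, Prod.snd_add, Prod.smul_fst,
        Prod.smul_snd, smul_eq_mul]
      refine ⟨?_, ?_, ?_, ?_, ?_, ?_, ?_, ?_⟩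
      · linarith [mul_le_mul_of_nonneg_left x1 ha, mul_le_mul_of_nonneg_left y1 hb]
      · linarith [mul_le_mul_of_nonneg_left x2 ha, mul_le_mul_of_nonneg_left y2 hb]
      · linarith [mul_le_mul_of_nonneg_left x3 ha, mul_le_mul_of_nonneg_left y3 hb]
      · linarith [mul_le_mul_of_nonneg_left x4 ha, mul_le_mul_of_nonneg_left y4 hb]
      · linarith [mul_le_mul_of_nonneg_left x5 ha, mul_le_mul_of_nonneg_left y5 hb]
      · linarith [mul_le_mul_of_nonneg_left x6 ha, mul_le_mul_of_nonneg_left y6 hb]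
      · linarith [mul_le_mul_of_nonneg_left x7 ha, mul_le_mul_of_nonneg_left y7 hb]
      · linarith [mul_le_mul_of_nonneg_left x8 ha, mul_le_mul_of_nonneg_left y8 hb]
  · rintro ⟨p, q, h⟩ ⟨h1, h2, h3, h4, h5, h6, h7, h8⟩
    simp only at h1 h2 h3 h4 h5 h6 h7 h8
    rcases eq_or_lt_of_le hpl with hpe | hplt
    · -- degenerate: pl = pu, the point is on the graph
      have hp : p = pl := le_antisymm (hpe ▸ h2) h1
      have : h = p * q := by nlinarith
      exact subset_convexHull ℝ _ ⟨p, q, h1, h2, h3, h4, by rw [this]⟩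
    rcases eq_or_lt_of_le hql with hqe | hqlt
    · have hq : q = ql := le_antisymm (hqe ▸ h4) h3
      have : h = p * q := by nlinarith
      exact subset_convexHull ℝ _ ⟨p, q, h1, h2, h3, h4, by rw [this]⟩
    have hD : (0:ℝ) < (pu - pl) * (qu - ql) := mul_pos (by linarith) (by linarith)
    have hDne : ((pu - pl) * (qu - ql)) ≠ 0 := ne_of_gt hD
    set D := (pu - pl) * (qu - ql) with hDdef
    set w : Fin 4 → ℝ := ![(h - (p * qu + q * pu - pu * qu)) / D,
      (p * ql + q * pu - pu * ql - h) / D,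
      (p * qu + q * pl - pl * qu - h) / D,
      (h - (p * ql + q * pl - pl * ql)) / D] with hw
    set z : Fin 4 → ℝ × ℝ × ℝ := ![(pl, ql, pl * ql), (pl, qu, pl * qu),
      (pu, ql, pu * ql), (pu, qu, pu * qu)] with hz
    have hmem : ∀ i ∈ Finset.univ, z i ∈
        {x : ℝ × ℝ × ℝ | ∃ p q, pl ≤ p ∧ p ≤ pu ∧ ql ≤ q ∧ q ≤ qu ∧
          x = (p, q, p * q)} := by
      intro i _
      fin_cases i
      · exact ⟨pl, ql, le_refl _, hpl, le_refl _, hql, rfl⟩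
      · exact ⟨pl, qu, le_refl _, hpl, hql, le_refl _, rfl⟩
      · exact ⟨pu, ql, hpl, le_refl _, le_refl _, hql, rfl⟩
      · exact ⟨pu, qu, hpl, le_refl _, hql, le_refl _, rfl⟩
    have hwnn : ∀ i ∈ Finset.univ, 0 ≤ w i := by
      intro i _
      fin_cases i <;> simp only [hw, Matrix.cons_val_zero, Matrix.cons_val_one,
        Matrix.head_cons, Matrix.cons_val_two, Matrix.tail_cons, Matrix.cons_val_three] <;>
        exact div_nonneg (by linarith) (le_of_lt hD)
    have hwsum : ∑ i, w i = 1 := by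
      simp only [hw, Fin.sum_univ_four, Matrix.cons_val_zero, Matrix.cons_val_one,
        Matrix.head_cons, Matrix.cons_val_two, Matrix.tail_cons, Matrix.cons_val_three]
      field_simp
      ring
    have key := (convex_convexHull ℝ _).sum_mem hwnn hwsum
      (fun i hi => subset_convexHull ℝ _ (hmem i hi))
    have heq : ∑ i, w i • z i = (p, q, h) := by
      simp only [hw, hz, Fin.sum_univ_four, Matrix.cons_val_zero, Matrix.cons_val_one,
        Matrix.head_cons, Matrix.cons_val_two, Matrix.tail_cons, Matrix.cons_val_three,
        Prod.smul_mk, smul_eq_mul, Prod.mk_add_mk, Prod.mk.injEq]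
      refine ⟨?_, ?_, ?_⟩ <;> (field_simp; ring)
    rw [heq] at key
    exact key
end
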